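/- Let q ∈ [1,3], ε ∈ (0,1), C₀, C₁ > 0. Let (r_j)_{j≥1} be a sequence of real numbers with r_j > 1 for all j and #{j : r_j ≤ T} ≤ C₀·T³ for all T ≥ 1, and let (c_j)_{j≥1} be complex numbers satisfying Σ_{j : r_j ≤ T} |c_j|² ≤ C₁·T^{q+ε} for all T ≥ 1. Then there exists a constant C₂ = C₂(q, ε, C₀, C₁) > 0 such that for every R ≥ 1, every η ∈ (0,1) and every sign s ∈ {+1,−1}, the series Σ_j h_±(r_j)·c_j converges absolutely and |Σ_j h_±(r_j)·c_j| ≤ C₂·R·e^{R}·η^{−(q−1)/2−ε}. -/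

import Mathlib

open MeasureTheory

/-- The Selberg transform of the indicator of a hyperbolic ball of radius `ρ` in `ℍ³`,
as a function of a real spectral parameter `r`. -/
noncomputable def hSel (ρ r : ℝ) : ℝ :=
  (4 * Real.pi / r) * ∫ u in (0:ℝ)..ρ, Real.sin (r * u) * Real.sinh u

/-- The smoothed Selberg transform `h_± = h_{R+sη} · h_η / μ(B_η)`,
where `μ(B_η) = π(sinh(2η) − 2η)`. -/
noncomputable def hPM (R η s r : ℝ) : ℝ :=
  hSel (R + s * η) r * hSel η r / (Real.pi * (Real.sinh (2 * η) - 2 * η))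




lemma integral_sin_sinh (a ρ : ℝ) :
    ∫ u in (0:ℝ)..ρ, Real.sin (a * u) * Real.sinh u
      = (Real.sin (a * ρ) * Real.cosh ρ - a * Real.cos (a * ρ) * Real.sinh ρ) / (1 + a ^ 2) := by
  have key : ∀ u : ℝ, HasDerivAt (fun u : ℝ =>
      (Real.sin (a * u) * Real.cosh u - a * Real.cos (a * u) * Real.sinh u) / (1 + a ^ 2))
      (Real.sin (a * u) * Real.sinh u) u := by
    intro u
    have h1 : HasDerivAt (fun u : ℝ => a * u) a u := by
      simpa using (hasDerivAt_id u).const_mul a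
    have h2 : HasDerivAt (fun u : ℝ => Real.sin (a * u) * Real.cosh u)
        (Real.cos (a * u) * a * Real.cosh u + Real.sin (a * u) * Real.sinh u) u :=
      h1.sin.mul (Real.hasDerivAt_cosh u)
    have h3 : HasDerivAt (fun u : ℝ => a * Real.cos (a * u) * Real.sinh u)
        ((a * (-Real.sin (a * u) * a)) * Real.sinh u + a * Real.cos (a * u) * Real.cosh u) u :=
      ((h1.cos.const_mul a).mul (Real.hasDerivAt_sinh u))
    have h4 := (h2.sub h3).div_const (1 + a ^ 2)
    have hne : (1 + a ^ 2) ≠ 0 := by positivity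
    refine h4.congr_deriv ?_
    field_simp
    ring
  rw [intervalIntegral.integral_eq_sub_of_hasDerivAt (fun u _ => key u)
    (Continuous.intervalIntegrable (by continuity) _ _)]
  simp


lemma cosh_quad (x : ℝ) : 1 + x ^ 2 / 2 ≤ Real.cosh x := by
  have h : Real.cosh x = 2 * Real.sinh (x / 2) ^ 2 + 1 := by
    have := Real.cosh_two_mul (x / 2)
    rw [show 2 * (x / 2) = x by ring] at this
    rw [this, Real.cosh_sq]; ring
  have habs : |x / 2| ≤ |Real.sinh (x / 2)| := by
    rw [Real.abs_sinh]
    exact Real.self_le_sinh_iff.mpr (abs_nonneg _)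
  have h2 : (x / 2) ^ 2 ≤ Real.sinh (x / 2) ^ 2 := by
    rw [← sq_abs (x / 2), ← sq_abs (Real.sinh (x / 2))]
    exact pow_le_pow_left₀ (abs_nonneg _) habs 2
  nlinarith

lemma cosh_le_exp' {x : ℝ} (hx : 0 ≤ x) : Real.cosh x ≤ Real.exp x := by
  rw [Real.cosh_eq]
  have : Real.exp (-x) ≤ Real.exp x := Real.exp_le_exp.mpr (by linarith)
  linarith

lemma sinh_cubic {x : ℝ} (hx : 0 ≤ x) : x + x ^ 3 / 6 ≤ Real.sinh x := by
  have hdiff : Differentiable ℝ (fun y : ℝ => Real.sinh y - (y + y ^ 3 / 6)) :=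
    Real.differentiable_sinh.sub (differentiable_id.add ((differentiable_pow 3).div_const 6))
  have mono : MonotoneOn (fun y : ℝ => Real.sinh y - (y + y ^ 3 / 6)) (Set.Ici 0) := by
    apply monotoneOn_of_deriv_nonneg (convex_Ici 0) hdiff.continuous.continuousOn
      hdiff.differentiableOn
    intro y hy
    rw [interior_Ici] at hy
    have hd : HasDerivAt (fun y : ℝ => Real.sinh y - (y + y ^ 3 / 6))
        (Real.cosh y - (1 + ↑3 * y ^ (3 - 1) / 6)) y :=
      (Real.hasDerivAt_sinh y).sub ((hasDerivAt_id y).add ((hasDerivAt_pow 3 y).div_const 6))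
    rw [hd.deriv]
    have := cosh_quad y
    norm_num
    nlinarith
  have := mono (Set.mem_Ici.mpr le_rfl) (Set.mem_Ici.mpr hx) hx
  simp only [Real.sinh_zero] at this
  norm_num at this
  linarith

lemma sinh_le_mul_exp {x : ℝ} (hx : 0 ≤ x) : Real.sinh x ≤ x * Real.exp x := by
  have hdiff : Differentiable ℝ (fun y : ℝ => y * Real.exp y - Real.sinh y) :=
    (differentiable_id.mul Real.differentiable_exp).sub Real.differentiable_sinh
  have mono : MonotoneOn (fun y : ℝ => y * Real.exp y - Real.sinh y) (Set.Ici 0) := by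
    apply monotoneOn_of_deriv_nonneg (convex_Ici 0) hdiff.continuous.continuousOn
      hdiff.differentiableOn
    intro y hy
    rw [interior_Ici] at hy
    have hd : HasDerivAt (fun y : ℝ => y * Real.exp y - Real.sinh y)
        (1 * Real.exp y + y * Real.exp y - Real.cosh y) y :=
      ((hasDerivAt_id y).mul (Real.hasDerivAt_exp y)).sub (Real.hasDerivAt_sinh y)
    rw [hd.deriv]
    have h1 := cosh_le_exp' (le_of_lt hy)
    have h2 : 0 ≤ y * Real.exp y := mul_nonneg (le_of_lt hy) (Real.exp_pos y).le
    linarith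
  have := mono (Set.mem_Ici.mpr le_rfl) (Set.mem_Ici.mpr hx) hx
  simp only [Real.sinh_zero, Real.exp_zero] at this
  norm_num at this
  linarith

lemma sinh_le_exp' {x : ℝ} (hx : 0 ≤ x) : Real.sinh x ≤ Real.exp x := by
  rw [Real.sinh_eq]
  have h1 : (0:ℝ) < Real.exp (-x) := Real.exp_pos _
  have h2 : (0:ℝ) < Real.exp x := Real.exp_pos _
  linarith

lemma hSel_abs_eq {ρ rr : ℝ} (hrr : 0 < rr) :
    |hSel ρ rr| = (4 * Real.pi / rr) *
      (|Real.sin (rr * ρ) * Real.cosh ρ - rr * Real.cos (rr * ρ) * Real.sinh ρ| / (1 + rr ^ 2)) := by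
  rw [hSel, integral_sin_sinh, abs_mul,
    abs_of_nonneg (show (0:ℝ) ≤ 4 * Real.pi / rr by positivity), abs_div,
    abs_of_nonneg (show (0:ℝ) ≤ 1 + rr ^ 2 by positivity)]

lemma hSel_num_bound₁ {ρ rr : ℝ} (hρ : 0 ≤ ρ) (hrr : 0 < rr) :
    |Real.sin (rr * ρ) * Real.cosh ρ - rr * Real.cos (rr * ρ) * Real.sinh ρ|
      ≤ (1 + rr) * Real.exp ρ := by
  have hs : 0 ≤ Real.sinh ρ := Real.sinh_nonneg_iff.mpr hρ
  have h1 : |Real.sin (rr * ρ) * Real.cosh ρ| ≤ Real.cosh ρ := by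
    rw [abs_mul, abs_of_nonneg (Real.cosh_pos ρ).le]
    exact mul_le_of_le_one_left (Real.cosh_pos ρ).le (Real.abs_sin_le_one _)
  have h2 : |rr * Real.cos (rr * ρ) * Real.sinh ρ| ≤ rr * Real.sinh ρ := by
    rw [abs_mul, abs_mul, abs_of_nonneg hrr.le, abs_of_nonneg hs]
    have h := Real.abs_cos_le_one (rr * ρ)
    nlinarith [mul_nonneg (mul_nonneg hrr.le (sub_nonneg.mpr h)) hs]
  have h3 := cosh_le_exp' hρ
  have h4 := sinh_le_exp' hρ
  calc |Real.sin (rr * ρ) * Real.cosh ρ - rr * Real.cos (rr * ρ) * Real.sinh ρ|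
      ≤ |Real.sin (rr * ρ) * Real.cosh ρ| + |rr * Real.cos (rr * ρ) * Real.sinh ρ| := abs_sub _ _
    _ ≤ Real.cosh ρ + rr * Real.sinh ρ := add_le_add h1 h2
    _ ≤ (1 + rr) * Real.exp ρ := by nlinarith

lemma hSel_bound_main {ρ rr : ℝ} (hρ : 0 ≤ ρ) (hrr : 1 ≤ rr) :
    |hSel ρ rr| ≤ 8 * Real.pi * Real.exp ρ / rr ^ 2 := by
  have hrr0 : (0:ℝ) < rr := lt_of_lt_of_le one_pos hrr
  rw [hSel_abs_eq hrr0]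
  have hπ := Real.pi_pos
  have hexp := Real.exp_pos ρ
  calc (4 * Real.pi / rr) *
      (|Real.sin (rr * ρ) * Real.cosh ρ - rr * Real.cos (rr * ρ) * Real.sinh ρ| / (1 + rr ^ 2))
      ≤ (4 * Real.pi / rr) * ((1 + rr) * Real.exp ρ / (1 + rr ^ 2)) := by
        gcongr
        exact hSel_num_bound₁ hρ hrr0
    _ ≤ 8 * Real.pi * Real.exp ρ / rr ^ 2 := by
        rw [div_mul_div_comm, div_le_div_iff₀ (by positivity) (by positivity)]
        have hcube : rr ^ 2 ≤ rr ^ 3 := by nlinarith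
        nlinarith [mul_le_mul_of_nonneg_left hcube (mul_nonneg hπ.le hexp.le),
          mul_nonneg (mul_nonneg hπ.le hexp.le) hrr0.le]

lemma integral_sinh_sq (b : ℝ) :
    ∫ u in (0:ℝ)..b, Real.sinh u ^ 2 = (Real.sinh (2 * b) - 2 * b) / 4 := by
  have key : ∀ u : ℝ, HasDerivAt (fun u : ℝ => (Real.sinh (2 * u) - 2 * u) / 4)
      (Real.sinh u ^ 2) u := by
    intro u
    have h1 : HasDerivAt (fun u : ℝ => 2 * u) 2 u := by
      simpa using (hasDerivAt_id u).const_mul 2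
    have h4 := (h1.sinh.sub h1).div_const 4
    refine h4.congr_deriv ?_
    rw [Real.cosh_two_mul, Real.cosh_sq]
    ring
  rw [intervalIntegral.integral_eq_sub_of_hasDerivAt (fun u _ => key u)
    (Continuous.intervalIntegrable (by continuity) _ _)]
  simp

lemma hSel_le_mu {η rr : ℝ} (hη : 0 ≤ η) (hrr : 0 < rr) :
    |hSel η rr| ≤ Real.pi * (Real.sinh (2 * η) - 2 * η) := by
  have hint1 : IntervalIntegrable (fun u : ℝ => |Real.sin (rr * u) * Real.sinh u|)
      MeasureTheory.volume 0 η :=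
    Continuous.intervalIntegrable (by continuity) _ _
  have hint2 : IntervalIntegrable (fun u : ℝ => rr * Real.sinh u ^ 2)
      MeasureTheory.volume 0 η :=
    Continuous.intervalIntegrable (by continuity) _ _
  have hmono : (∫ u in (0:ℝ)..η, |Real.sin (rr * u) * Real.sinh u|)
      ≤ ∫ u in (0:ℝ)..η, rr * Real.sinh u ^ 2 := by
    apply intervalIntegral.integral_mono_on hη hint1 hint2
    intro u hu
    obtain ⟨hu0, _⟩ := hu
    have hsu : 0 ≤ Real.sinh u := Real.sinh_nonneg_iff.mpr hu0
    have h1 : |Real.sin (rr * u)| ≤ rr * u := by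
      have := Real.abs_sin_le_abs (x := rr * u)
      rwa [abs_of_nonneg (mul_nonneg hrr.le hu0)] at this
    have h2 : u ≤ Real.sinh u := Real.self_le_sinh_iff.mpr hu0
    rw [abs_mul, abs_of_nonneg hsu]
    calc |Real.sin (rr * u)| * Real.sinh u ≤ (rr * u) * Real.sinh u :=
          mul_le_mul_of_nonneg_right h1 hsu
      _ ≤ rr * Real.sinh u ^ 2 := by nlinarith [mul_le_mul_of_nonneg_left (mul_le_mul_of_nonneg_right h2 hsu) hrr.le]
  have habs : |∫ u in (0:ℝ)..η, Real.sin (rr * u) * Real.sinh u|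
      ≤ ∫ u in (0:ℝ)..η, |Real.sin (rr * u) * Real.sinh u| :=
    intervalIntegral.abs_integral_le_integral_abs hη
  have hval : (∫ u in (0:ℝ)..η, rr * Real.sinh u ^ 2)
      = rr * ((Real.sinh (2 * η) - 2 * η) / 4) := by
    rw [intervalIntegral.integral_const_mul, integral_sinh_sq]
  rw [hSel, abs_mul, abs_of_nonneg (show (0:ℝ) ≤ 4 * Real.pi / rr by positivity)]
  calc (4 * Real.pi / rr) * |∫ u in (0:ℝ)..η, Real.sin (rr * u) * Real.sinh u|
      ≤ (4 * Real.pi / rr) * (rr * ((Real.sinh (2 * η) - 2 * η) / 4)) := by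
        apply mul_le_mul_of_nonneg_left _ (by positivity)
        exact habs.trans (hmono.trans_eq hval)
    _ = Real.pi * (Real.sinh (2 * η) - 2 * η) := by
        field_simp

lemma hSel_bound_eta {η rr : ℝ} (hη : 0 ≤ η) (hη1 : η ≤ 1) (hrr : 1 ≤ rr) :
    |hSel η rr| ≤ 24 * Real.pi * η / rr ^ 2 := by
  have hrr0 : (0:ℝ) < rr := lt_of_lt_of_le one_pos hrr
  rw [hSel_abs_eq hrr0]
  have hπ := Real.pi_pos
  have he : Real.exp η ≤ 3 := by
    calc Real.exp η ≤ Real.exp 1 := Real.exp_le_exp.mpr hη1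
      _ ≤ 3 := by
        have := Real.exp_one_lt_d9
        linarith
  have hnum : |Real.sin (rr * η) * Real.cosh η - rr * Real.cos (rr * η) * Real.sinh η|
      ≤ 6 * (rr * η) := by
    have hs : 0 ≤ Real.sinh η := Real.sinh_nonneg_iff.mpr hη
    have h1 : |Real.sin (rr * η) * Real.cosh η| ≤ (rr * η) * 3 := by
      rw [abs_mul, abs_of_nonneg (Real.cosh_pos η).le]
      have hsin : |Real.sin (rr * η)| ≤ rr * η := by
        have := Real.abs_sin_le_abs (x := rr * η)
        rwa [abs_of_nonneg (mul_nonneg hrr0.le hη)] at this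
      have hch : Real.cosh η ≤ 3 := (cosh_le_exp' hη).trans he
      have := Real.cosh_pos η
      nlinarith [abs_nonneg (Real.sin (rr * η))]
    have h2 : |rr * Real.cos (rr * η) * Real.sinh η| ≤ rr * (η * 3) := by
      rw [abs_mul, abs_mul, abs_of_nonneg hrr0.le, abs_of_nonneg hs]
      have hc := Real.abs_cos_le_one (rr * η)
      have hsh : Real.sinh η ≤ η * 3 := by
        calc Real.sinh η ≤ η * Real.exp η := sinh_le_mul_exp hη
          _ ≤ η * 3 := mul_le_mul_of_nonneg_left he hη
      have h0 : 0 ≤ |Real.cos (rr * η)| := abs_nonneg _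
      nlinarith [mul_nonneg (mul_nonneg hrr0.le (sub_nonneg.mpr hc)) hs]
    calc |Real.sin (rr * η) * Real.cosh η - rr * Real.cos (rr * η) * Real.sinh η|
        ≤ |Real.sin (rr * η) * Real.cosh η| + |rr * Real.cos (rr * η) * Real.sinh η| :=
          abs_sub _ _
      _ ≤ 6 * (rr * η) := by linarith
  calc (4 * Real.pi / rr) *
      (|Real.sin (rr * η) * Real.cosh η - rr * Real.cos (rr * η) * Real.sinh η| / (1 + rr ^ 2))
      ≤ (4 * Real.pi / rr) * ((6 * (rr * η)) / (1 + rr ^ 2)) := by gcongr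
    _ ≤ 24 * Real.pi * η / rr ^ 2 := by
        rw [div_mul_div_comm, div_le_div_iff₀ (by positivity) (by positivity)]
        nlinarith [mul_nonneg (mul_nonneg hπ.le hη) hrr0.le,
          mul_nonneg (mul_nonneg (mul_nonneg hπ.le hη) hrr0.le) (mul_nonneg hrr0.le hrr0.le)]

lemma interp_min {rr η A : ℝ} (hrr : 1 ≤ rr) (hη : 0 < η) (hη1 : η ≤ 1)
    (hA : 0 ≤ A) (hA2 : A ≤ 2) :
    min (rr ^ (-2:ℝ)) (η ^ (-2:ℝ) * rr ^ (-4:ℝ)) ≤ η ^ (-A) * rr ^ (-2 - A) := by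
  have hrr0 : (0:ℝ) < rr := lt_of_lt_of_le one_pos hrr
  rcases le_total (η * rr) 1 with hcase | hcase
  · -- small r: use rr ^ (-2)
    apply (min_le_left _ _).trans
    have h1 : (1:ℝ) ≤ (η * rr) ^ (-A) :=
      Real.one_le_rpow_of_pos_of_le_one_of_nonpos (by positivity) hcase (by linarith)
    have heq : η ^ (-A) * rr ^ (-2 - A) = rr ^ (-2:ℝ) * (η * rr) ^ (-A) := by
      rw [Real.mul_rpow hη.le hrr0.le, show (-2 - A : ℝ) = (-2) + (-A) by ring,
        Real.rpow_add hrr0]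
      ring
    rw [heq]
    nth_rewrite 1 [← mul_one (rr ^ (-2:ℝ))]
    exact mul_le_mul_of_nonneg_left h1 (Real.rpow_nonneg hrr0.le _)
  · -- large r: use η ^ (-2) * rr ^ (-4)
    apply (min_le_right _ _).trans
    have h1 : (η * rr) ^ (A - 2) ≤ 1 :=
      Real.rpow_le_one_of_one_le_of_nonpos hcase (by linarith)
    have heq : η ^ (-2:ℝ) * rr ^ (-4:ℝ) = (η ^ (-A) * rr ^ (-2 - A)) * (η * rr) ^ (A - 2) := by
      rw [Real.mul_rpow hη.le hrr0.le, show (-2:ℝ) = (-A) + (A - 2) by ring,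
        Real.rpow_add hη, show (-4:ℝ) = (-2 - A) + (A - 2) by ring, Real.rpow_add hrr0]
      ring
    rw [heq]
    nth_rewrite 2 [← mul_one (η ^ (-A) * rr ^ (-2 - A))]
    exact mul_le_mul_of_nonneg_left h1 (by positivity)

lemma hPM_bound {R η s rr A : ℝ} (hR : 1 ≤ R) (hη : 0 < η) (hη1 : η < 1)
    (hs : s = 1 ∨ s = -1) (hrr : 1 ≤ rr) (hA : 0 ≤ A) (hA2 : A ≤ 2) :
    |hPM R η s rr| ≤ 432 * Real.pi * Real.exp R * (η ^ (-A) * rr ^ (-2 - A)) := by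
  have hrr0 : (0:ℝ) < rr := lt_of_lt_of_le one_pos hrr
  have hπ := Real.pi_pos
  have hexp := Real.exp_pos R
  have hμpos : 0 < Real.pi * (Real.sinh (2 * η) - 2 * η) := by
    have := Real.self_lt_sinh_iff.mpr (show 0 < 2 * η by linarith)
    have h' : 0 < Real.sinh (2 * η) - 2 * η := by linarith
    positivity
  have hρ0 : 0 ≤ R + s * η := by rcases hs with h | h <;> rw [h] <;> nlinarith
  have hρ1 : R + s * η ≤ R + 1 := by rcases hs with h | h <;> rw [h] <;> nlinarith
  -- main factor bound
  have hmain : |hSel (R + s * η) rr| ≤ 24 * Real.pi * Real.exp R / rr ^ 2 := by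
    refine (hSel_bound_main hρ0 hrr).trans ?_
    have h1 : Real.exp (R + s * η) ≤ 3 * Real.exp R := by
      rw [Real.exp_add]
      have h2 : Real.exp (s * η) ≤ 3 := by
        calc Real.exp (s * η) ≤ Real.exp 1 := Real.exp_le_exp.mpr (by linarith)
          _ ≤ 3 := by have := Real.exp_one_lt_d9; linarith
      nlinarith
    rw [div_le_div_iff₀ (by positivity) (by positivity)]
    nlinarith [sq_nonneg rr, mul_le_mul_of_nonneg_left h1
      (show (0:ℝ) ≤ 8 * Real.pi * rr ^ 2 by positivity)]
  -- path 1
  have hpath1 : |hPM R η s rr| ≤ 24 * Real.pi * Real.exp R / rr ^ 2 := by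
    rw [hPM, abs_div, abs_of_pos hμpos, div_le_iff₀ hμpos, abs_mul]
    calc |hSel (R + s * η) rr| * |hSel η rr|
        ≤ (24 * Real.pi * Real.exp R / rr ^ 2) * (Real.pi * (Real.sinh (2 * η) - 2 * η)) :=
          mul_le_mul hmain (hSel_le_mu hη.le hrr0) (abs_nonneg _) (by positivity)
      _ = 24 * Real.pi * Real.exp R / rr ^ 2 * (Real.pi * (Real.sinh (2 * η) - 2 * η)) := rfl
  -- path 2
  have hμlow : 4 * Real.pi / 3 * η ^ 3 ≤ Real.pi * (Real.sinh (2 * η) - 2 * η) := by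
    have := sinh_cubic (show (0:ℝ) ≤ 2 * η by linarith)
    nlinarith [Real.pi_pos]
  have hpath2 : |hPM R η s rr| ≤ 432 * Real.pi * Real.exp R / (η ^ 2 * rr ^ 4) := by
    rw [hPM, abs_div, abs_of_pos hμpos, abs_mul]
    have hnum : |hSel (R + s * η) rr| * |hSel η rr|
        ≤ (24 * Real.pi * Real.exp R / rr ^ 2) * (24 * Real.pi * η / rr ^ 2) :=
      mul_le_mul hmain (hSel_bound_eta hη.le hη1.le hrr) (abs_nonneg _) (by positivity)
    calc |hSel (R + s * η) rr| * |hSel η rr| / (Real.pi * (Real.sinh (2 * η) - 2 * η))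
        ≤ ((24 * Real.pi * Real.exp R / rr ^ 2) * (24 * Real.pi * η / rr ^ 2))
            / (4 * Real.pi / 3 * η ^ 3) :=
          div_le_div₀ (by positivity) hnum (by positivity) hμlow
      _ = 432 * Real.pi * Real.exp R / (η ^ 2 * rr ^ 4) := by
          field_simp
          ring
  -- combine
  have hconv2 : rr ^ (-2:ℝ) = (rr ^ 2)⁻¹ := by
    rw [show (-2:ℝ) = -(2:ℕ) by norm_num, Real.rpow_neg hrr0.le, Real.rpow_natCast]
  have hconv4 : rr ^ (-4:ℝ) = (rr ^ 4)⁻¹ := by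
    rw [show (-4:ℝ) = -(4:ℕ) by norm_num, Real.rpow_neg hrr0.le, Real.rpow_natCast]
  have hconvη : η ^ (-2:ℝ) = (η ^ 2)⁻¹ := by
    rw [show (-2:ℝ) = -(2:ℕ) by norm_num, Real.rpow_neg hη.le, Real.rpow_natCast]
  have hmin : |hPM R η s rr| ≤ 432 * Real.pi * Real.exp R *
      min (rr ^ (-2:ℝ)) (η ^ (-2:ℝ) * rr ^ (-4:ℝ)) := by
    rcases le_total (rr ^ (-2:ℝ)) (η ^ (-2:ℝ) * rr ^ (-4:ℝ)) with h | h
    · rw [min_eq_left h, hconv2]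
      refine hpath1.trans ?_
      rw [div_eq_mul_inv]
      gcongr
      linarith
    · rw [min_eq_right h, hconvη, hconv4]
      refine hpath2.trans ?_
      rw [div_eq_mul_inv, mul_inv]
  refine hmin.trans ?_
  gcongr
  exact interp_min hrr hη hη1.le hA hA2

lemma core_sum_bound (q ε C₀ C₁ : ℝ) (r : ℕ → ℝ) (c : ℕ → ℂ) (hq : q ∈ Set.Icc (1:ℝ) 3) (hε : ε ∈ Set.Ioo (0:ℝ) 1)
    (hC₀ : 0 < C₀) (hC₁ : 0 < C₁)
    (hr : ∀ j, 1 < r j)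
    (hfin : ∀ T : ℝ, {j | r j ≤ T}.Finite)
    (hcount : ∀ T : ℝ, 1 ≤ T → ((hfin T).toFinset.card : ℝ) ≤ C₀ * T ^ 3)
    (hc : ∀ T : ℝ, 1 ≤ T →
      (∑ᶠ (j : ℕ) (_ : r j ≤ T), ‖c j‖ ^ 2) ≤ C₁ * T ^ (q + ε)) :
    ∀ u : Finset ℕ, ∑ j ∈ u, (r j) ^ (-2 - ((q - 1)/2 + ε)) * ‖c j‖
      ≤ 16 * Real.sqrt (C₀ * C₁) / (1 - (2:ℝ) ^ (-(ε/2))) := by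
  obtain ⟨hq1, hq3⟩ := hq
  obtain ⟨hε0, hε1⟩ := hε
  set A : ℝ := (q - 1)/2 + ε with hAdef
  set x : ℝ := (2:ℝ) ^ (-(ε/2)) with hxdef
  have hx0 : 0 < x := Real.rpow_pos_of_pos two_pos _
  have hx1 : x < 1 := Real.rpow_lt_one_of_one_lt_of_neg one_lt_two (by linarith)
  intro u
  classical
  set k : ℕ → ℕ := fun j => Nat.log 2 ⌊r j⌋₊ with hk
  have hrange : ∀ j, ((2:ℝ)) ^ (k j) ≤ r j ∧ r j < (2:ℝ) ^ (k j + 1) := by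
    intro j
    have hr0 : (0:ℝ) ≤ r j := by linarith [hr j]
    have h1 : 1 ≤ ⌊r j⌋₊ := Nat.le_floor (by exact_mod_cast (hr j).le)
    constructor
    · have h2 : (2:ℕ) ^ (k j) ≤ ⌊r j⌋₊ := Nat.pow_log_le_self 2 (by omega)
      calc ((2:ℝ)) ^ (k j) = ((2 ^ (k j) : ℕ) : ℝ) := by push_cast; ring
        _ ≤ (⌊r j⌋₊ : ℝ) := by exact_mod_cast h2
        _ ≤ r j := Nat.floor_le hr0
    · have h2 : ⌊r j⌋₊ + 1 ≤ 2 ^ (k j + 1) := Nat.lt_pow_succ_log_self one_lt_two _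
      calc r j < (⌊r j⌋₊ : ℝ) + 1 := Nat.lt_floor_add_one _
        _ ≤ ((2:ℝ)) ^ (k j + 1) := by exact_mod_cast h2
  set N := u.sup k + 1 with hN
  have hmaps : ∀ j ∈ u, k j ∈ Finset.range N :=
    fun j hj => Finset.mem_range.mpr (Nat.lt_succ_of_le (Finset.le_sup hj))
  rw [← Finset.sum_fiberwise_of_maps_to hmaps]
  have hfiber : ∀ m : ℕ, (∑ j ∈ u.filter (fun j => k j = m), (r j) ^ (-2 - A) * ‖c j‖)
      ≤ 16 * Real.sqrt (C₀ * C₁) * x ^ m := by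
    intro m
    set v := u.filter (fun j => k j = m) with hv
    set T : ℝ := (2:ℝ) ^ (m + 1) with hT
    have hT0 : (0:ℝ) < T := by positivity
    have hT1 : (1:ℝ) ≤ T := one_le_pow₀ (by norm_num)
    have hvmem : ∀ j ∈ v, r j ≤ T ∧ (2:ℝ) ^ m ≤ r j := by
      intro j hj
      obtain ⟨-, hkj⟩ := Finset.mem_filter.mp hj
      obtain ⟨hlow, hhigh⟩ := hrange j
      rw [hkj] at hlow hhigh
      exact ⟨hhigh.le, hlow⟩
    have hvsub : v ⊆ (hfin T).toFinset := by
      intro j hj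
      rw [Set.Finite.mem_toFinset]
      exact (hvmem j hj).1
    have hcard : ((v.card : ℕ) : ℝ) ≤ C₀ * T ^ 3 :=
      le_trans (by exact_mod_cast Finset.card_le_card hvsub) (hcount T hT1)
    have hsq : (∑ j ∈ v, ‖c j‖ ^ 2) ≤ C₁ * T ^ (q + ε) := by
      calc (∑ j ∈ v, ‖c j‖ ^ 2) ≤ ∑ j ∈ (hfin T).toFinset, ‖c j‖ ^ 2 :=
            Finset.sum_le_sum_of_subset_of_nonneg hvsub (fun _ _ _ => by positivity)
        _ = ∑ᶠ (j : ℕ) (_ : r j ≤ T), ‖c j‖ ^ 2 :=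
            (finsum_mem_eq_finite_toFinset_sum (fun j => ‖c j‖ ^ 2) (hfin T)).symm
        _ ≤ C₁ * T ^ (q + ε) := hc T hT1
    have hsum0 : (0:ℝ) ≤ ∑ j ∈ v, ‖c j‖ := Finset.sum_nonneg fun _ _ => norm_nonneg _
    have hCS : (∑ j ∈ v, ‖c j‖) ≤ Real.sqrt (C₀ * T ^ 3 * (C₁ * T ^ (q + ε))) := by
      apply Real.le_sqrt_of_sq_le
      calc (∑ j ∈ v, ‖c j‖) ^ 2 ≤ (v.card : ℝ) * ∑ j ∈ v, ‖c j‖ ^ 2 := by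
            exact_mod_cast sq_sum_le_card_mul_sum_sq (s := v) (f := fun j => ‖c j‖)
        _ ≤ C₀ * T ^ 3 * (C₁ * T ^ (q + ε)) :=
            mul_le_mul hcard hsq (Finset.sum_nonneg fun _ _ => by positivity) (by positivity)
    set E : ℝ := (3 + (q + ε)) / 2 with hE
    have hsqrt_eq : Real.sqrt (C₀ * T ^ 3 * (C₁ * T ^ (q + ε)))
        = Real.sqrt (C₀ * C₁) * ((2:ℝ) ^ E * (2:ℝ) ^ ((m:ℝ) * E)) := by
      have e0 : T ^ ((3:ℝ)) = T ^ (3:ℕ) := by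
        rw [← Real.rpow_natCast T 3]
        norm_num
      have e1 : C₀ * T ^ 3 * (C₁ * T ^ (q + ε)) = (C₀ * C₁) * T ^ ((3:ℝ) + (q + ε)) := by
        rw [Real.rpow_add hT0 (3:ℝ) (q+ε), e0]
        ring
      rw [e1, Real.sqrt_mul (by positivity), Real.sqrt_eq_rpow (T ^ ((3:ℝ) + (q + ε))),
        ← Real.rpow_mul hT0.le]
      congr 1
      have e2 : T = (2:ℝ) ^ (((m:ℝ) + 1)) := by
        rw [hT, ← Real.rpow_natCast 2 (m+1)]
        norm_num
      rw [e2, ← Real.rpow_mul (by norm_num : (0:ℝ) ≤ 2), ← Real.rpow_add (by norm_num : (0:ℝ) < 2)]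
      congr 1
      rw [hE]
      ring
    have hpow : ∀ j ∈ v, (r j) ^ (-2 - A) ≤ (2:ℝ) ^ ((m:ℝ) * (-2 - A)) := by
      intro j hj
      have hA0 : 0 ≤ A := by rw [hAdef]; linarith
      have hb : (0:ℝ) < (2:ℝ) ^ ((m:ℝ)) := by positivity
      have hle : (2:ℝ) ^ ((m:ℝ)) ≤ r j := by
        rw [Real.rpow_natCast]
        exact (hvmem j hj).2
      calc (r j) ^ (-2 - A) ≤ ((2:ℝ) ^ ((m:ℝ))) ^ (-2 - A) :=
            Real.rpow_le_rpow_of_nonpos hb hle (by linarith)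
        _ = (2:ℝ) ^ ((m:ℝ) * (-2 - A)) := by
            rw [← Real.rpow_mul (by norm_num : (0:ℝ) ≤ 2)]
    calc (∑ j ∈ v, (r j) ^ (-2 - A) * ‖c j‖)
        ≤ ∑ j ∈ v, (2:ℝ) ^ ((m:ℝ) * (-2 - A)) * ‖c j‖ :=
          Finset.sum_le_sum fun j hj => mul_le_mul_of_nonneg_right (hpow j hj) (norm_nonneg _)
      _ = (2:ℝ) ^ ((m:ℝ) * (-2 - A)) * ∑ j ∈ v, ‖c j‖ := by rw [Finset.mul_sum]
      _ ≤ (2:ℝ) ^ ((m:ℝ) * (-2 - A)) *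
            (Real.sqrt (C₀ * C₁) * ((2:ℝ) ^ E * (2:ℝ) ^ ((m:ℝ) * E))) := by
          apply mul_le_mul_of_nonneg_left _ (by positivity)
          rw [← hsqrt_eq]
          exact hCS
      _ ≤ 16 * Real.sqrt (C₀ * C₁) * x ^ m := by
          have h16 : (2:ℝ) ^ E ≤ 16 := by
            calc (2:ℝ) ^ E ≤ (2:ℝ) ^ (4:ℝ) :=
                  Real.rpow_le_rpow_of_exponent_le one_le_two (by rw [hE]; linarith)
              _ = 16 := by
                  rw [show (4:ℝ) = ((4:ℕ):ℝ) by norm_num, Real.rpow_natCast]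
                  norm_num
          have hxm : (2:ℝ) ^ ((m:ℝ) * (-2 - A)) * (2:ℝ) ^ ((m:ℝ) * E) = x ^ m := by
            rw [← Real.rpow_add (by norm_num : (0:ℝ) < 2), hxdef,
              ← Real.rpow_natCast ((2:ℝ) ^ (-(ε/2))) m, ← Real.rpow_mul (by norm_num : (0:ℝ) ≤ 2)]
            congr 1
            rw [hE, hAdef]
            ring
          calc (2:ℝ) ^ ((m:ℝ) * (-2 - A)) *
                (Real.sqrt (C₀ * C₁) * ((2:ℝ) ^ E * (2:ℝ) ^ ((m:ℝ) * E)))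
              = ((2:ℝ) ^ E) * (Real.sqrt (C₀ * C₁) *
                  ((2:ℝ) ^ ((m:ℝ) * (-2 - A)) * (2:ℝ) ^ ((m:ℝ) * E))) := by ring
            _ = ((2:ℝ) ^ E) * (Real.sqrt (C₀ * C₁) * x ^ m) := by rw [hxm]
            _ ≤ 16 * (Real.sqrt (C₀ * C₁) * x ^ m) :=
                mul_le_mul_of_nonneg_right h16 (by positivity)
            _ = 16 * Real.sqrt (C₀ * C₁) * x ^ m := by ring
  calc (∑ m ∈ Finset.range N, ∑ j ∈ u.filter (fun j => k j = m), (r j) ^ (-2 - A) * ‖c j‖)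
      ≤ ∑ m ∈ Finset.range N, 16 * Real.sqrt (C₀ * C₁) * x ^ m :=
        Finset.sum_le_sum fun m _ => hfiber m
    _ = 16 * Real.sqrt (C₀ * C₁) * ∑ m ∈ Finset.range N, x ^ m := by rw [Finset.mul_sum]
    _ ≤ 16 * Real.sqrt (C₀ * C₁) * (1 - x)⁻¹ := by
        apply mul_le_mul_of_nonneg_left _ (by positivity)
        calc (∑ m ∈ Finset.range N, x ^ m) ≤ ∑' m : ℕ, x ^ m :=
              Summable.sum_le_tsum _ (fun m _ => by positivity)
                (summable_geometric_of_lt_one hx0.le hx1)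
          _ = (1 - x)⁻¹ := tsum_geometric_of_lt_one hx0.le hx1
    _ = 16 * Real.sqrt (C₀ * C₁) / (1 - x) := by rw [div_eq_mul_inv]


/-- Under a Weyl-law count `#{j : r_j ≤ T} ≤ C₀ T³` and a quantum-variance bound
`Σ_{r_j ≤ T} |c_j|² ≤ C₁ T^{q+ε}`, the twisted smoothed spectral sum
`Σ_j h_±(r_j) c_j` converges absolutely and is `≤ C₂ R e^R η^{−(q−1)/2−ε}`. -/
theorem smoothed_spectral_sum_quantum_variance_bound
    (q ε C₀ C₁ : ℝ) (hq : q ∈ Set.Icc (1:ℝ) 3) (hε : ε ∈ Set.Ioo (0:ℝ) 1)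
    (hC₀ : 0 < C₀) (hC₁ : 0 < C₁)
    (r : ℕ → ℝ) (hr : ∀ j, 1 < r j)
    (hfin : ∀ T : ℝ, {j | r j ≤ T}.Finite)
    (hcount : ∀ T : ℝ, 1 ≤ T → ((hfin T).toFinset.card : ℝ) ≤ C₀ * T ^ 3)
    (c : ℕ → ℂ)
    (hc : ∀ T : ℝ, 1 ≤ T →
      (∑ᶠ (j : ℕ) (_ : r j ≤ T), ‖c j‖ ^ 2) ≤ C₁ * T ^ (q + ε)) :
    ∃ C₂ : ℝ, 0 < C₂ ∧ ∀ R : ℝ, 1 ≤ R → ∀ η : ℝ, 0 < η → η < 1 →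
      ∀ s : ℝ, (s = 1 ∨ s = -1) →
        Summable (fun j => ‖(hPM R η s (r j) : ℂ) * c j‖) ∧
        ‖∑' j, (hPM R η s (r j) : ℂ) * c j‖
          ≤ C₂ * R * Real.exp R * η ^ (-(q - 1)/2 - ε) := by
  obtain ⟨hq1, hq3⟩ := hq
  obtain ⟨hε0, hε1⟩ := hε
  have hπ := Real.pi_pos
  set A : ℝ := (q - 1)/2 + ε with hAdef
  have hA0 : 0 ≤ A := by rw [hAdef]; linarith
  have hA2 : A ≤ 2 := by rw [hAdef]; linarith
  set x : ℝ := (2:ℝ) ^ (-(ε/2)) with hxdef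
  have hx0 : 0 < x := Real.rpow_pos_of_pos two_pos _
  have hx1 : x < 1 := Real.rpow_lt_one_of_one_lt_of_neg one_lt_two (by linarith)
  set D : ℝ := 16 * Real.sqrt (C₀ * C₁) / (1 - x) with hDdef
  have hD : 0 < D := by
    rw [hDdef]
    have h1 : 0 < 1 - x := by linarith
    have h2 : 0 < Real.sqrt (C₀ * C₁) := Real.sqrt_pos.mpr (by positivity)
    positivity
  have hcore : ∀ u : Finset ℕ, (∑ j ∈ u, (r j) ^ (-2 - A) * ‖c j‖) ≤ D :=
    core_sum_bound q ε C₀ C₁ r c ⟨hq1, hq3⟩ ⟨hε0, hε1⟩ hC₀ hC₁ hr hfin hcount hc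
  refine ⟨432 * Real.pi * D, by positivity, ?_⟩
  intro R hR η hη0 hη1 s hs
  have hexp := Real.exp_pos R
  have hηA : (0:ℝ) < η ^ (-A) := Real.rpow_pos_of_pos hη0 _
  have hpt : ∀ j, ‖(hPM R η s (r j) : ℂ) * c j‖
      ≤ (432 * Real.pi * Real.exp R * η ^ (-A)) * ((r j) ^ (-2 - A) * ‖c j‖) := by
    intro j
    rw [norm_mul, Complex.norm_real, Real.norm_eq_abs]
    calc |hPM R η s (r j)| * ‖c j‖
        ≤ (432 * Real.pi * Real.exp R * (η ^ (-A) * (r j) ^ (-2 - A))) * ‖c j‖ :=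
          mul_le_mul_of_nonneg_right (hPM_bound hR hη0 hη1 hs (hr j).le hA0 hA2)
            (norm_nonneg _)
      _ = (432 * Real.pi * Real.exp R * η ^ (-A)) * ((r j) ^ (-2 - A) * ‖c j‖) := by ring
  have hkey : ∀ u : Finset ℕ, (∑ j ∈ u, ‖(hPM R η s (r j) : ℂ) * c j‖)
      ≤ 432 * Real.pi * D * Real.exp R * η ^ (-A) := by
    intro u
    calc (∑ j ∈ u, ‖(hPM R η s (r j) : ℂ) * c j‖)
        ≤ ∑ j ∈ u, (432 * Real.pi * Real.exp R * η ^ (-A)) * ((r j) ^ (-2 - A) * ‖c j‖) :=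
          Finset.sum_le_sum fun j _ => hpt j
      _ = (432 * Real.pi * Real.exp R * η ^ (-A)) * ∑ j ∈ u, (r j) ^ (-2 - A) * ‖c j‖ := by
          rw [Finset.mul_sum]
      _ ≤ (432 * Real.pi * Real.exp R * η ^ (-A)) * D :=
          mul_le_mul_of_nonneg_left (hcore u) (by positivity)
      _ = 432 * Real.pi * D * Real.exp R * η ^ (-A) := by ring
  have hsummable : Summable (fun j => ‖(hPM R η s (r j) : ℂ) * c j‖) :=
    summable_of_sum_le (fun j => norm_nonneg _) hkey
  refine ⟨hsummable, ?_⟩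
  have h1 : ‖∑' j, (hPM R η s (r j) : ℂ) * c j‖ ≤ ∑' j, ‖(hPM R η s (r j) : ℂ) * c j‖ :=
    norm_tsum_le_tsum_norm hsummable
  have h2 : (∑' j, ‖(hPM R η s (r j) : ℂ) * c j‖)
      ≤ 432 * Real.pi * D * Real.exp R * η ^ (-A) :=
    Summable.tsum_le_of_sum_le hsummable hkey
  have hre : η ^ (-(q - 1)/2 - ε) = η ^ (-A) := by
    rw [show -(q - 1)/2 - ε = -A by rw [hAdef]; ring]
  rw [hre]
  calc ‖∑' j, (hPM R η s (r j) : ℂ) * c j‖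
      ≤ 432 * Real.pi * D * Real.exp R * η ^ (-A) := h1.trans h2
    _ = (432 * Real.pi * D * Real.exp R * η ^ (-A)) * 1 := by ring
    _ ≤ (432 * Real.pi * D * Real.exp R * η ^ (-A)) * R :=
        mul_le_mul_of_nonneg_left hR (by positivity)
    _ = 432 * Real.pi * D * R * Real.exp R * η ^ (-A) := by ring
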